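/- Let G be an inverse semigroup and A a G-algebra. There is a well-defined map α from E(G) to the *-endomorphisms of A such that α_p = α_{e₀}∘(id_A−α_{e₁})∘⋯∘(id_A−α_{eₙ}) whenever p = e₀(1−e₁)⋯(1−eₙ) ∈ E(G) with e₀,…,eₙ idempotents of G (i.e., the right-hand side depends only on p as an element of 𝔽(G,A)); this map is a semigroup homomorphism (α_{pq} = α_p∘α_q for p,q ∈ E(G)) and it extends the restriction of the given G-action to the idempotents of G. -/

import Mathlib

/-! Common setup: inverse semigroups, G-algebras, and the universal *-algebra 𝔽(G,A). -/

noncomputable section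

/-- An inverse semigroup: a semigroup in which every element `g` has a unique
generalized inverse, denoted `star g`. -/
class InverseSemigroup (G : Type*) extends Semigroup G, Star G where
  mul_star_mul_self : ∀ g : G, g * star g * g = g
  star_mul_self_mul_star : ∀ g : G, star g * g * star g = star g
  star_unique : ∀ g h : G, g * h * g = g → h * g * h = h → h = star g

namespace Green

/-! ### The free complex *-algebra on a set of generators

The free complex *-algebra on a set `Y` is realized as the monoid algebra of the free
monoid on the letters `Y × Bool` (a generator together with a formal star flag); its star
operation conjugates coefficients, reverses words and flips the star flags. -/

/-- The free complex *-algebra on the set `Y`. -/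
abbrev FreeStar (Y : Type*) := MonoidAlgebra ℂ (FreeMonoid (Y × Bool))

namespace FreeStar

variable {Y : Type*}

/-- Star of a word: reverse it and flip all star flags. -/
def wordStar (w : FreeMonoid (Y × Bool)) : FreeMonoid (Y × Bool) :=
  FreeMonoid.ofList (((FreeMonoid.toList w).map fun x => (x.1, !x.2)).reverse)

lemma wordStar_mul (v w : FreeMonoid (Y × Bool)) :
    wordStar (v * w) = wordStar w * wordStar v := by
  simp [wordStar, FreeMonoid.toList_mul]

lemma wordStar_wordStar (w : FreeMonoid (Y × Bool)) : wordStar (wordStar w) = w := by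
  simp [wordStar, List.map_reverse, List.map_map, Function.comp_def]

/-- The star operation on the free complex *-algebra, as an additive map. -/
def starAux : FreeStar Y →+ FreeStar Y :=
  (MonoidAlgebra.coeffAddEquiv.symm.toAddMonoidHom).comp
    (((Finsupp.mapDomain.addMonoidHom wordStar).comp
      (Finsupp.mapRange.addMonoidHom (starRingEnd ℂ).toAddMonoidHom)).comp
      (MonoidAlgebra.coeffAddEquiv.toAddMonoidHom))

lemma starAux_apply (f : FreeStar Y) :
    starAux f = MonoidAlgebra.ofCoeff
      (Finsupp.mapDomain wordStar (Finsupp.mapRange (starRingEnd ℂ) (map_zero _) f.coeff)) :=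
  rfl

lemma starAux_single (w : FreeMonoid (Y × Bool)) (c : ℂ) :
    starAux (MonoidAlgebra.single w c) = MonoidAlgebra.single (wordStar w) (starRingEnd ℂ c) := by
  rw [starAux_apply]
  simp [MonoidAlgebra.coeff_single, Finsupp.mapRange_single, Finsupp.mapDomain_single,
    MonoidAlgebra.ofCoeff_single]

instance instStarRing : StarRing (FreeStar Y) where
  star := starAux
  star_involutive := by
    intro f
    induction f using MonoidAlgebra.induction_linear with
    | zero => simp
    | add f g hf hg => simp_all [map_add]
    | single w c => simp [starAux_single, wordStar_wordStar, starRingEnd_self_apply]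
  star_mul := by
    intro f g
    show starAux (f * g) = starAux g * starAux f
    induction f using MonoidAlgebra.induction_linear with
    | zero => simp
    | add f f' hf hf' => simp [mul_add, add_mul, map_add, hf, hf']
    | single w c =>
      induction g using MonoidAlgebra.induction_linear with
      | zero => simp
      | add g g' hg hg' => simp [mul_add, add_mul, map_add, hg, hg']
      | single v d =>
        simp only [MonoidAlgebra.single_mul_single, starAux_single, wordStar_mul, map_mul]
        rw [mul_comm]
  star_add := map_add _

end FreeStar

section GAlgebra

variable {G : Type*} [InverseSemigroup G]
variable {A : Type*} [NonUnitalNormedRing A] [StarRing A] [CStarRing A] [NormedSpace ℂ A]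
  [IsScalarTower ℂ A A] [SMulCommClass ℂ A A] [StarModule ℂ A] [CompleteSpace A]

/-- `α` is an action of the inverse semigroup `G` on the C*-algebra `A` making it a
`G`-algebra: a semigroup homomorphism `G → End(A)` into the *-endomorphisms of `A` such
that `g g*(a)·b = a·g g*(b)` for all `a b : A` and `g : G`. -/
structure IsGAlgebra (α : G → A →⋆ₙₐ[ℂ] A) : Prop where
  map_mul : ∀ g h : G, α (g * h) = (α g).comp (α h)
  central : ∀ (g : G) (a b : A), α (g * star g) a * b = a * α (g * star g) b

variable (α : G → A →⋆ₙₐ[ℂ] A)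

/-- The generator of the free *-algebra corresponding to `a ∈ A`. -/
def genA (a : A) : FreeStar (A ⊕ G) := MonoidAlgebra.single (FreeMonoid.of (Sum.inl a, false)) 1

/-- The generator of the free *-algebra corresponding to `g ∈ G`. -/
def genG (g : G) : FreeStar (A ⊕ G) := MonoidAlgebra.single (FreeMonoid.of (Sum.inr g, false)) 1

/-- The defining relations of `𝔽(G,A)`: the *-algebra relations of `A` are respected, the
multiplication and involution of `G` are respected, and `g(a)·g g* = g·a·g*`,
`[g g*, a] = 0` hold; the relation is moreover closed under `star`, so that the ideal
generated by it is a two-sided *-ideal. -/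
inductive Rel : FreeStar (A ⊕ G) → FreeStar (A ⊕ G) → Prop
  | add_A (a b : A) : Rel (genA (G := G) (a + b)) (genA a + genA b)
  | smul_A (c : ℂ) (a : A) : Rel (genA (G := G) (c • a)) (c • genA a)
  | mul_A (a b : A) : Rel (genA (G := G) (a * b)) (genA a * genA b)
  | star_A (a : A) : Rel (genA (G := G) (star a)) (star (genA a))
  | mul_G (g h : G) : Rel (genG (A := A) (g * h)) (genG g * genG h)
  | star_G (g : G) : Rel (genG (A := A) (star g)) (star (genG g))
  | act (g : G) (a : A) :
      Rel (genA (α g a) * genG g * genG (star g)) (genG g * genA a * genG (star g))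
  | comm (g : G) (a : A) :
      Rel (genG g * genG (star g) * genA a) (genA a * genG g * genG (star g))
  | star_cl {x y} : Rel x y → Rel (star x) (star y)

/-- The universal *-algebra `𝔽(G,A)`: the quotient of the free complex *-algebra on the
set `A ⊔ G` by the two-sided *-ideal generated by the defining relations. -/
abbrev F := RingQuot (Rel α)

instance : StarRing (F α) := RingQuot.starRing _ (fun _ _ h => Rel.star_cl h)

/-- The canonical copy of `a ∈ A` inside `𝔽(G,A)`. -/
def ιA (a : A) : F α := RingQuot.mkAlgHom ℂ (Rel α) (genA a)

/-- The canonical copy of `g ∈ G` inside `𝔽(G,A)`. -/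
def ιG (g : G) : F α := RingQuot.mkAlgHom ℂ (Rel α) (genG g)

/-- The element `e₀(1-e₁)⋯(1-eₙ)` of `𝔽(G,A)` (product expanded multiplicatively),
given `e₀` and the list `[e₁, …, eₙ]`. -/
def elemP (e₀ : G) (l : List G) : F α :=
  l.foldl (fun p e => p - p * ιG α e) (ιG α e₀)

/-- The element `g·e₀(1-e₁)⋯(1-eₙ)` of `𝔽(G,A)`. -/
def elemGE (g e₀ : G) (l : List G) : F α := ιG α g * elemP α e₀ l

/-- The set `E(G)` of projections `e₀(1-e₁)⋯(1-eₙ)` in `𝔽(G,A)`, with `e₀, …, eₙ`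
idempotents of `G`. -/
def EG : Set (F α) :=
  {x | ∃ (e₀ : G) (l : List G), e₀ * e₀ = e₀ ∧ (∀ e ∈ l, e * e = e) ∧ x = elemP α e₀ l}

/-- The inverse semigroup `G_E = {g·p | g ∈ G, p ∈ E(G)}` inside `𝔽(G,A)`. -/
def GE : Set (F α) :=
  {x | ∃ (g e₀ : G) (l : List G),
    e₀ * e₀ = e₀ ∧ (∀ e ∈ l, e * e = e) ∧ x = elemGE α g e₀ l}

/-- The extension of the `G`-action along a list: `(id - α e₁)∘⋯∘(id - α eₙ)`. -/
def actL : List G → A → A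
  | [] => id
  | e :: l => fun a => actL l a - α e (actL l a)

/-- The extension of the `G`-action to `E(G)`:
`α_{e₀(1-e₁)⋯(1-eₙ)} = α_{e₀}∘(id - α_{e₁})∘⋯∘(id - α_{eₙ})`. -/
def actP (e₀ : G) (l : List G) : A → A := fun a => α e₀ (actL α l a)

/-- The extension of the `G`-action to `G_E`: `α_{g·p} = α_g ∘ α_p`. -/
def actGE (g e₀ : G) (l : List G) : A → A := fun a => α g (actP α e₀ l a)

/-- The action of `k* = (g·e₀(1-e₁)⋯(1-eₙ))* = g*·(g e₀ g*)(1 - g e₁ g*)⋯(1 - g eₙ g*)`,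
for `k = g·e₀(1-e₁)⋯(1-eₙ) ∈ G_E`. -/
def actStar (g e₀ : G) (l : List G) : A → A :=
  fun a => α (star g) (actP α (g * e₀ * star g) (l.map fun e => g * e * star g) a)

/-- The subalgebra `A_{k k*} = α_{k k*}(A) = (α_k ∘ α_{k*})(A)`,
for `k = g·e₀(1-e₁)⋯(1-eₙ) ∈ G_E`. -/
def carrier (g e₀ : G) (l : List G) : Set A :=
  Set.range fun a => actGE α g e₀ l (actStar α g e₀ l a)

/-- `S` is a sub-inverse semigroup of `G`: a subset closed under multiplication and
involution. -/
structure IsSubInvSemigroup (S : Set G) : Prop where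
  mul_mem : ∀ {a b : G}, a ∈ S → b ∈ S → a * b ∈ S
  star_mem : ∀ {a : G}, a ∈ S → star a ∈ S

variable (S : Set G)

/-- The set `E(H')` of projections `e₀(1-e₁)⋯(1-eₙ)` with `e₀, …, eₙ` idempotents of
`H' = S`. -/
def EH : Set (F α) :=
  {x | ∃ (e₀ : G) (l : List G), (e₀ ∈ S ∧ e₀ * e₀ = e₀) ∧ (∀ e ∈ l, e ∈ S ∧ e * e = e) ∧
    x = elemP α e₀ l}

/-- `H⁽⁰⁾`: the set of nonzero minimal projections of `E(H')`
(where `q ≤ p` means `q p = q`). -/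
def H0 : Set (F α) :=
  {p | p ∈ EH α S ∧ p ≠ 0 ∧ ∀ q ∈ EH α S, q ≠ 0 → q * p = q → q = p}

/-- The groupoid `H = {t·e | t ∈ H', e ∈ H⁽⁰⁾} \ {0}` associated to `H'`. -/
def Hgpd : Set (F α) :=
  {x | x ≠ 0 ∧ ∃ t ∈ S, ∃ e ∈ H0 α S, x = ιG α t * e}

/-- `G_H = {g·e | g ∈ G, e ∈ H⁽⁰⁾, g* g ≥ e} \ {0}`. -/
def GH : Set (F α) :=
  {x | x ≠ 0 ∧ ∃ (g : G), ∃ e ∈ H0 α S, x = ιG α g * e ∧ e * ιG α (star g * g) = e}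

/-- The relation `≡` on `G_H`: `g ≡ h` iff `g t = h` for some `t ∈ H`. -/
def equivH (x y : F α) : Prop := ∃ t ∈ Hgpd α S, x * t = y

end GAlgebra

/-- For an assertion `P`, the scalar `[P]` which is `1` if `P` is true and `0` if `P`
is false. -/
def ind (P : Prop) : ℂ := @ite _ P (Classical.propDecidable P) 1 0

end Green

namespace Green

/-! ### Auxiliary development for the proof -/
set_option linter.unusedSectionVars false

section InvSemigroupFacts

variable {G : Type*} [InverseSemigroup G]

open InverseSemigroup

lemma isg_star_idem {e : G} (he : e * e = e) : star e = e :=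
  (star_unique e e (by rw [he, he]) (by rw [he, he])).symm

lemma isg_star_star (g : G) : star (star g) = g :=
  (star_unique (star g) g (star_mul_self_mul_star g) (mul_star_mul_self g)).symm

lemma isg_mul_idem {e f : G} (he : e * e = e) (hf : f * f = f) :
    (e * f) * (e * f) = e * f := by
  set a := star (e * f) with ha
  have h1 : (e * f) * a * (e * f) = e * f := mul_star_mul_self (e * f)
  have h2 : a * (e * f) * a = a := star_mul_self_mul_star (e * f)
  have hb : f * (a * e) = a := by
    refine star_unique (e * f) (f * (a * e)) ?_ ?_
    · calc e * f * (f * (a * e)) * (e * f)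
          = e * ((f * f) * (a * ((e * e) * f))) := by simp only [mul_assoc]
        _ = e * (f * (a * (e * f))) := by rw [he, hf]
        _ = e * f * a * (e * f) := by simp only [mul_assoc]
        _ = e * f := h1
    · have h2' : a * (e * (f * a)) = a := by simpa only [mul_assoc] using h2
      calc f * (a * e) * (e * f) * (f * (a * e))
          = f * (a * ((e * e) * ((f * f) * (a * e)))) := by simp only [mul_assoc]
        _ = f * (a * (e * (f * (a * e)))) := by rw [he, hf]
        _ = f * ((a * (e * (f * a))) * e) := by simp only [mul_assoc]
        _ = f * (a * e) := by rw [h2']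
  have ha2 : a * a = a := by
    have h2' : a * (e * (f * a)) = a := by
      have := h2; simpa only [mul_assoc] using this
    calc a * a = f * (a * e) * (f * (a * e)) := by rw [hb]
      _ = f * ((a * (e * (f * a))) * e) := by simp only [mul_assoc]
      _ = f * (a * e) := by rw [h2']
      _ = a := hb
  have hsa : star a = a := isg_star_idem ha2
  have hef : e * f = a := by
    calc e * f = star (star (e * f)) := (isg_star_star _).symm
      _ = star a := by rw [← ha]
      _ = a := hsa
  rw [hef]; exact ha2

lemma isg_idem_comm {e f : G} (he : e * e = e) (hf : f * f = f) :
    e * f = f * e := by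
  have hef := isg_mul_idem he hf
  have hfe := isg_mul_idem hf he
  have h1 : f * e = star (e * f) := by
    refine star_unique (e * f) (f * e) ?_ ?_
    · calc e * f * (f * e) * (e * f)
          = e * ((f * f) * ((e * e) * f)) := by simp only [mul_assoc]
        _ = e * (f * (e * f)) := by rw [he, hf]
        _ = (e * f) * (e * f) := by simp only [mul_assoc]
        _ = e * f := hef
    · calc f * e * (e * f) * (f * e)
          = f * ((e * e) * ((f * f) * e)) := by simp only [mul_assoc]
        _ = f * (e * (f * e)) := by rw [he, hf]
        _ = (f * e) * (f * e) := by simp only [mul_assoc]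
        _ = f * e := hfe
  rw [h1, isg_star_idem hef]

lemma isg_gs_idem (g : G) : (g * star g) * (g * star g) = g * star g := by
  calc (g * star g) * (g * star g) = (g * star g * g) * star g := by
        simp only [mul_assoc]
    _ = g * star g := by rw [mul_star_mul_self]

lemma isg_sg_idem (g : G) : (star g * g) * (star g * g) = star g * g := by
  calc (star g * g) * (star g * g) = (star g * g * star g) * g := by
        simp only [mul_assoc]
    _ = star g * g := by rw [star_mul_self_mul_star]

lemma isg_star_mul (g h : G) : star (g * h) = star h * star g := by
  have hcomm : (h * star h) * (star g * g) = (star g * g) * (h * star h) :=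
    isg_idem_comm (isg_gs_idem h) (isg_sg_idem g)
  refine (star_unique (g * h) (star h * star g) ?_ ?_).symm
  · calc g * h * (star h * star g) * (g * h)
        = g * ((h * star h) * (star g * g) * h) := by simp only [mul_assoc]
      _ = g * ((star g * g) * (h * star h) * h) := by rw [hcomm]
      _ = (g * star g * g) * (h * star h * h) := by simp only [mul_assoc]
      _ = g * h := by rw [mul_star_mul_self, mul_star_mul_self]
  · calc star h * star g * (g * h) * (star h * star g)
        = star h * ((star g * g) * (h * star h) * star g) := by simp only [mul_assoc]
      _ = star h * ((h * star h) * (star g * g) * star g) := by rw [← hcomm]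
      _ = (star h * h * star h) * (star g * g * star g) := by simp only [mul_assoc]
      _ = star h * star g := by rw [star_mul_self_mul_star, star_mul_self_mul_star]

end InvSemigroupFacts

section MainAux

open InverseSemigroup

variable {G : Type*} [InverseSemigroup G]
variable {A : Type*} [NonUnitalNormedRing A] [StarRing A] [CStarRing A] [NormedSpace ℂ A]
  [IsScalarTower ℂ A A] [SMulCommClass ℂ A A] [StarModule ℂ A] [CompleteSpace A]
variable (α : G → A →⋆ₙₐ[ℂ] A)

/-- The action as a linear endomorphism. -/
def αLin (g : G) : Module.End ℂ A :=
  { toFun := ⇑(α g), map_add' := map_add _, map_smul' := map_smul _ }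

@[simp] lemma αLin_apply (g : G) (a : A) : αLin α g a = α g a := rfl

/-- The images of the generators. -/
def phiGen : (A ⊕ G) × Bool → Module.End ℂ A
  | (Sum.inl a, false) => LinearMap.mulLeft ℂ a
  | (Sum.inl a, true) => LinearMap.mulLeft ℂ (star a)
  | (Sum.inr g, false) => αLin α g
  | (Sum.inr g, true) => αLin α (star g)

@[simp] lemma phiGen_inl_f (a : A) : phiGen α (Sum.inl a, false) = LinearMap.mulLeft ℂ a := rfl
@[simp] lemma phiGen_inl_t (a : A) : phiGen α (Sum.inl a, true) = LinearMap.mulLeft ℂ (star a) := rfl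
@[simp] lemma phiGen_inr_f (g : G) : phiGen α (Sum.inr g, false) = αLin α g := rfl
@[simp] lemma phiGen_inr_t (g : G) : phiGen α (Sum.inr g, true) = αLin α (star g) := rfl

/-- The representation of the free *-algebra on `End(A)`. -/
def piF : FreeStar (A ⊕ G) →ₐ[ℂ] Module.End ℂ A :=
  MonoidAlgebra.lift ℂ _ _ (FreeMonoid.lift (phiGen α))

/-- A single generator of the free *-algebra. -/
def gen (s : A ⊕ G) (b : Bool) : FreeStar (A ⊕ G) :=
  MonoidAlgebra.single (FreeMonoid.of (s, b)) 1

lemma genA_eq (a : A) : genA (G := G) a = gen (Sum.inl a) false := rfl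

lemma genG_eq (g : G) : genG (A := A) g = gen (Sum.inr g) false := rfl

@[simp] lemma piF_gen (s : A ⊕ G) (b : Bool) :
    piF α (gen s b) = phiGen α (s, b) := by
  simp [piF, gen, MonoidAlgebra.lift_single]

lemma wordStar_of (s : A ⊕ G) (b : Bool) :
    FreeStar.wordStar (FreeMonoid.of ((s, b) : (A ⊕ G) × Bool))
      = FreeMonoid.of (s, !b) := by
  simp only [FreeStar.wordStar, FreeMonoid.toList_of, List.map_cons, List.map_nil,
    List.reverse_cons, List.reverse_nil, List.nil_append]
  rfl

lemma star_gen (s : A ⊕ G) (b : Bool) : star (gen s b) = gen s (!b) := by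
  show FreeStar.starAux (gen s b) = gen s (!b)
  rw [gen, FreeStar.starAux_single, wordStar_of, map_one]
  rfl

set_option maxRecDepth 4000 in
lemma star_smul_gen (c : ℂ) (s : A ⊕ G) (b : Bool) :
    star (c • gen s b) = (starRingEnd ℂ) c • gen s (!b) := by
  show FreeStar.starAux (c • gen s b) = _
  rw [gen, MonoidAlgebra.smul_single', FreeStar.starAux_single]
  rw [wordStar_of, gen, MonoidAlgebra.smul_single', mul_one, mul_one]

variable {α}

lemma act_act (hα : IsGAlgebra α) (g h : G) (x : A) :
    α g (α h x) = α (g * h) x := by rw [hα.map_mul]; rfl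

lemma central_idem (hα : IsGAlgebra α) {e : G} (he : e * e = e) (a b : A) :
    α e a * b = a * α e b := by
  have h := hα.central e a b
  rwa [isg_star_idem he, he] at h

variable (α)

lemma piF_rel (hα : IsGAlgebra α) : ∀ {x y : FreeStar (A ⊕ G)}, Rel α x y →
    piF α x = piF α y ∧ piF α (star x) = piF α (star y) := by
  have hgs : ∀ (g : G) (x : A), α g (α (star g) x) = α (g * star g) x :=
    fun g x => act_act hα g (star g) x
  intro x y h
  induction h with
  | add_A a b =>
    constructor
    · simp only [genA_eq, map_add, piF_gen, phiGen_inl_f, phiGen_inl_t, phiGen_inr_f, phiGen_inr_t, Bool.not_false, Bool.not_true]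
      ext c; simp [add_mul]
    · simp only [genA_eq, star_add, star_gen, map_add, piF_gen, phiGen_inl_f, phiGen_inl_t, phiGen_inr_f, phiGen_inr_t, Bool.not_false, Bool.not_true]
      ext c; simp [star_add, add_mul]
  | smul_A c a =>
    constructor
    · simp only [genA_eq, map_smul, piF_gen, phiGen_inl_f, phiGen_inl_t, phiGen_inr_f, phiGen_inr_t, Bool.not_false, Bool.not_true]
      ext x; simp [smul_mul_assoc]
    · simp only [genA_eq, star_smul_gen, star_gen, map_smul, piF_gen, phiGen_inl_f, phiGen_inl_t, phiGen_inr_f, phiGen_inr_t, Bool.not_false, Bool.not_true]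
      ext x; simp [smul_mul_assoc]
  | mul_A a b =>
    constructor
    · simp only [genA_eq, map_mul, piF_gen, phiGen_inl_f, phiGen_inl_t, phiGen_inr_f, phiGen_inr_t, Bool.not_false, Bool.not_true]
      ext c; simp [Module.End.mul_apply, mul_assoc]
    · simp only [genA_eq, star_mul, star_gen, map_mul, piF_gen, phiGen_inl_f, phiGen_inl_t, phiGen_inr_f, phiGen_inr_t, Bool.not_false, Bool.not_true]
      ext c; simp [Module.End.mul_apply, star_mul, mul_assoc]
  | star_A a =>
    constructor
    · simp only [genA_eq, star_gen, piF_gen, phiGen_inl_f, phiGen_inl_t, phiGen_inr_f, phiGen_inr_t, Bool.not_false, Bool.not_true]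
    · simp only [genA_eq, star_gen, star_star, piF_gen, phiGen_inl_f, phiGen_inl_t, phiGen_inr_f, phiGen_inr_t, Bool.not_false, Bool.not_true, isg_star_star]
  | mul_G g h =>
    constructor
    · simp only [genG_eq, map_mul, piF_gen, phiGen_inl_f, phiGen_inl_t, phiGen_inr_f, phiGen_inr_t, Bool.not_false, Bool.not_true]
      ext x; simp only [Module.End.mul_apply, αLin_apply]
      rw [act_act hα]
    · simp only [genG_eq, star_mul, star_gen, map_mul, piF_gen, phiGen_inl_f, phiGen_inl_t, phiGen_inr_f, phiGen_inr_t, Bool.not_false, Bool.not_true]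
      ext x; simp only [Module.End.mul_apply, αLin_apply]
      rw [act_act hα, isg_star_mul]
  | star_G g =>
    constructor
    · simp only [genG_eq, star_gen, piF_gen, phiGen_inl_f, phiGen_inl_t, phiGen_inr_f, phiGen_inr_t, Bool.not_false, Bool.not_true]
    · simp only [genG_eq, star_gen, star_star, piF_gen, phiGen_inl_f, phiGen_inl_t, phiGen_inr_f, phiGen_inr_t, Bool.not_false, Bool.not_true, isg_star_star]
  | act g a =>
    constructor
    · simp only [genA_eq, genG_eq, map_mul, piF_gen, phiGen_inl_f, phiGen_inl_t, phiGen_inr_f, phiGen_inr_t, Bool.not_false, Bool.not_true]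
      ext b
      simp only [Module.End.mul_apply, αLin_apply, LinearMap.mulLeft_apply]
      rw [map_mul (α g) a]
    · simp only [genA_eq, genG_eq, star_mul, star_gen, map_mul, piF_gen, phiGen_inl_f, phiGen_inl_t, phiGen_inr_f, phiGen_inr_t, Bool.not_false, Bool.not_true, isg_star_star]
      ext b
      simp only [Module.End.mul_apply, αLin_apply, LinearMap.mulLeft_apply]
      rw [← map_star (α g) a, map_mul (α g), map_mul (α (star g)), map_mul (α g),
        act_act hα g (star g), act_act hα (g * star g) g,
        act_act hα g (star g)]
      rw [InverseSemigroup.mul_star_mul_self]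
  | comm g a =>
    constructor
    · simp only [genA_eq, genG_eq, map_mul, piF_gen, phiGen_inl_f, phiGen_inl_t, phiGen_inr_f, phiGen_inr_t, Bool.not_false, Bool.not_true]
      ext b
      simp only [Module.End.mul_apply, αLin_apply, LinearMap.mulLeft_apply]
      rw [hgs g, hgs g, map_mul (α (g * star g)), hα.central g,
        act_act hα (g * star g) (g * star g), isg_gs_idem]
    · simp only [genA_eq, genG_eq, star_mul, star_gen, map_mul, piF_gen, phiGen_inl_f, phiGen_inl_t, phiGen_inr_f, phiGen_inr_t, Bool.not_false, Bool.not_true, isg_star_star]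
      ext b
      simp only [Module.End.mul_apply, αLin_apply, LinearMap.mulLeft_apply]
      rw [hgs g, hgs g, map_mul (α (g * star g)), hα.central g,
        act_act hα (g * star g) (g * star g), isg_gs_idem]
  | star_cl h ih =>
    exact ⟨ih.2, by simpa only [star_star] using ih.1⟩

/-- The induced representation of `𝔽(G,A)` on `End(A)`. -/
def piQ (hα : IsGAlgebra α) : F α →ₐ[ℂ] Module.End ℂ A :=
  RingQuot.liftAlgHom ℂ ⟨piF α, fun _ _ h => (piF_rel α hα h).1⟩

lemma piQ_ιG (hα : IsGAlgebra α) (g : G) : piQ α hα (ιG α g) = αLin α g := by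
  rw [ιG, piQ, RingQuot.liftAlgHom_mkAlgHom_apply, genG_eq, piF_gen]
  rfl

lemma piQ_foldl (hα : IsGAlgebra α) (l : List G) (z : F α) :
    piQ α hα (l.foldl (fun p e => p - p * ιG α e) z)
      = l.foldl (fun S e => S - S * αLin α e) (piQ α hα z) := by
  induction l generalizing z with
  | nil => rfl
  | cons e l ih =>
    simp only [List.foldl_cons, ih, map_sub, map_mul, piQ_ιG]

lemma foldl_apply (l : List G) (T : Module.End ℂ A) (a : A) :
    (l.foldl (fun S e => S - S * αLin α e) T) a = T (actL α l a) := by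
  induction l generalizing T with
  | nil => rfl
  | cons e l ih =>
    rw [List.foldl_cons, ih]
    simp only [LinearMap.sub_apply, Module.End.mul_apply, αLin_apply]
    rw [← map_sub]
    rfl

lemma piQ_elemP (hα : IsGAlgebra α) (e₀ : G) (l : List G) :
    ⇑(piQ α hα (elemP α e₀ l)) = actP α e₀ l := by
  funext a
  rw [elemP, piQ_foldl, piQ_ιG, foldl_apply]
  rfl

variable {α}

/-- The key invariant carried along a list of idempotents. -/
def GoodOp (T : Module.End ℂ A) : Prop :=
  (∀ x y : A, T (x * y) = x * T y) ∧ (∀ x y : A, T (x * y) = T x * y) ∧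
  T * T = T ∧ ∀ f : G, f * f = f → T * αLin α f = αLin α f * T

lemma αLin_comp (hα : IsGAlgebra α) (g h : G) :
    αLin α g * αLin α h = αLin α (g * h) := by
  ext x; simp only [Module.End.mul_apply, αLin_apply]; rw [act_act hα]

lemma good_αLin (hα : IsGAlgebra α) {e : G} (he : e * e = e) :
    GoodOp (α := α) (αLin α e) := by
  have hcomp : ∀ x : A, α e (α e x) = α e x := by
    intro x; rw [act_act hα, he]
  refine ⟨?_, ?_, ?_, ?_⟩
  · intro x y
    simp only [αLin_apply]
    rw [map_mul (α e), central_idem hα he, hcomp]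
  · intro x y
    simp only [αLin_apply]
    rw [map_mul (α e), ← central_idem hα he (α e x) y, hcomp]
  · rw [αLin_comp hα, he]
  · intro f hf
    rw [αLin_comp hα, αLin_comp hα, isg_idem_comm he hf]

lemma good_step (hα : IsGAlgebra α) {T : Module.End ℂ A} (hT : GoodOp (α := α) T)
    {e : G} (he : e * e = e) : GoodOp (α := α) (T - T * αLin α e) := by
  obtain ⟨hTl, hTr, hTT, hTc⟩ := hT
  have hE : αLin α e * αLin α e = αLin α e := by rw [αLin_comp hα, he]
  have hc : T * αLin α e = αLin α e * T := hTc e he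
  have hEgood := good_αLin hα he
  refine ⟨?_, ?_, ?_, ?_⟩
  · intro x y
    simp only [LinearMap.sub_apply, Module.End.mul_apply]
    rw [hTl, hEgood.1, hTl, ← mul_sub]
  · intro x y
    simp only [LinearMap.sub_apply, Module.End.mul_apply]
    rw [hTr, hEgood.2.1, hTr, ← sub_mul]
  · have h1 : T * αLin α e * T = T * αLin α e := by
      rw [mul_assoc, ← hc, ← mul_assoc, hTT]
    have h2 : T * αLin α e * (T * αLin α e) = T * αLin α e := by
      rw [← mul_assoc, h1, mul_assoc, hE]
    simp only [sub_mul, mul_sub]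
    rw [← mul_assoc T T, hTT, h1, h2]
    simp
  · intro f hf
    have hEF : αLin α e * αLin α f = αLin α f * αLin α e := by
      rw [αLin_comp hα, αLin_comp hα, isg_idem_comm he hf]
    have hTF : T * αLin α f = αLin α f * T := hTc f hf
    simp only [sub_mul, mul_sub]
    rw [hTF, mul_assoc, hEF, ← mul_assoc, hTF, mul_assoc]

lemma good_foldl (hα : IsGAlgebra α) (l : List G) (hl : ∀ e ∈ l, e * e = e)
    {T : Module.End ℂ A} (hT : GoodOp (α := α) T) :
    GoodOp (α := α) (l.foldl (fun S e => S - S * αLin α e) T) := by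
  induction l generalizing T with
  | nil => exact hT
  | cons e l ih =>
    rw [List.foldl_cons]
    exact ih (fun e' he' => hl e' (List.mem_cons_of_mem _ he'))
      (good_step hα hT (hl e List.mem_cons_self))

lemma good_mul {T : Module.End ℂ A} (hT : GoodOp (α := α) T) (x y : A) :
    T (x * y) = T x * T y := by
  have hTT : T (T y) = T y := by rw [← Module.End.mul_apply, hT.2.2.1]
  calc T (x * y) = x * T y := hT.1 x y
    _ = x * T (T y) := by rw [hTT]
    _ = T (x * T y) := (hT.1 x (T y)).symm
    _ = T x * T y := hT.2.1 x (T y)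

lemma star_foldl (l : List G) (T : Module.End ℂ A)
    (hT : ∀ x : A, T (star x) = star (T x)) (x : A) :
    (l.foldl (fun S e => S - S * αLin α e) T) (star x)
      = star ((l.foldl (fun S e => S - S * αLin α e) T) x) := by
  induction l generalizing T with
  | nil => exact hT x
  | cons e l ih =>
    rw [List.foldl_cons]
    refine ih _ fun z => ?_
    simp only [LinearMap.sub_apply, Module.End.mul_apply, αLin_apply]
    rw [map_star (α e), hT, hT, ← star_sub]

end MainAux

/-- Let `G` be an inverse semigroup and `A` a `G`-algebra.  There is a
well-defined map `β` from `E(G)` to the *-endomorphisms of `A` such that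
`β_p = α_{e₀}∘(id−α_{e₁})∘⋯∘(id−α_{eₙ})` whenever `p = e₀(1−e₁)⋯(1−eₙ) ∈ E(G)` with
`e₀, …, eₙ` idempotents of `G` (the right-hand side depends only on `p` as an element of
`𝔽(G,A)`); this map is a semigroup homomorphism on `E(G)` and extends the restriction of
the `G`-action to the idempotents of `G`. -/
theorem action_extends_to_projections
    {G : Type*} [InverseSemigroup G]
    {A : Type*} [NonUnitalNormedRing A] [StarRing A] [CStarRing A] [NormedSpace ℂ A]
    [IsScalarTower ℂ A A] [SMulCommClass ℂ A A] [StarModule ℂ A] [CompleteSpace A]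
    (α : G → A →⋆ₙₐ[ℂ] A) (hα : IsGAlgebra α) :
    ∃ β : {p : F α // p ∈ EG α} → A → A,
      (∀ (e₀ : G) (l : List G), e₀ * e₀ = e₀ → (∀ e ∈ l, e * e = e) →
        ∀ hp : elemP α e₀ l ∈ EG α, β ⟨elemP α e₀ l, hp⟩ = actP α e₀ l) ∧
      (∀ p : {p : F α // p ∈ EG α},
        (∀ x y : A, β p (x + y) = β p x + β p y) ∧
        (∀ (c : ℂ) (x : A), β p (c • x) = c • β p x) ∧
        (∀ x y : A, β p (x * y) = β p x * β p y) ∧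
        (∀ x : A, β p (star x) = star (β p x))) ∧
      (∀ (p q : F α) (hp : p ∈ EG α) (hq : q ∈ EG α) (hpq : p * q ∈ EG α),
        β ⟨p * q, hpq⟩ = fun x => β ⟨p, hp⟩ (β ⟨q, hq⟩ x)) ∧
      (∀ (e : G), e * e = e → ∀ he : elemP α e [] ∈ EG α,
        β ⟨elemP α e [], he⟩ = ⇑(α e)) := by
  classical
  refine ⟨fun p x => piQ α hα p.1 x, ?_, ?_, ?_, ?_⟩
  · intro e₀ l h₀ hl hp
    funext x
    exact congrFun (piQ_elemP α hα e₀ l) x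
  · rintro ⟨p, hpm⟩
    obtain ⟨e₀, l, h₀, hl, hp⟩ := hpm
    have hT : piQ α hα p = l.foldl (fun S e => S - S * αLin α e) (αLin α e₀) := by
      rw [hp, elemP, piQ_foldl, piQ_ιG]
    have hg : GoodOp (α := α) (piQ α hα p) := by
      rw [hT]; exact good_foldl hα l hl (good_αLin hα h₀)
    refine ⟨fun x y => map_add _ _ _, fun c x => map_smul _ _ _,
      fun x y => good_mul hg x y, fun x => ?_⟩
    show piQ α hα p (star x) = star (piQ α hα p x)
    rw [hT]
    exact star_foldl l _ (fun z => map_star (α e₀) z) x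
  · intro p q hp hq hpq
    funext x
    show piQ α hα (p * q) x = piQ α hα p (piQ α hα q x)
    rw [map_mul, Module.End.mul_apply]
  · intro e he hmem
    funext x
    show piQ α hα (elemP α e []) x = α e x
    have h0 : elemP α e [] = ιG α e := rfl
    rw [h0, piQ_ιG]
    rfl


end Green
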